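/- With notation as in the quadric coordinate ring: in ℂ[z₂,…,z_{2n}]/(q(1,z₂,…,z_{2n})), the relation z_{n−1} z_{n+2} = p₁ p₂ + p₃ holds, where p₁ = z_n, p₂ = z_{n+1}, and p₃ = Σ_{m=0}^{n−4}(−1)^m z_{n−2−m} z_{n+3+m} + (−1)^{n−3} z_{2n} (with z₁ = 1, interpreting indices appropriately). (Case k = n−1 of the exchange relations on the quadric.) -/

import Mathlib

/-- The elements `p_k` of the coordinate ring of the affine cell of the quadric:
`p 1 = z n`, `p 2 = z (n+1)`, and for `3 ≤ k ≤ n`,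
`p k = Σ_{m=0}^{n-k-1} (−1)^m z_{n+1−k−m} z_{n+k+m} + (−1)^{n−k} z_{2n}`. -/
def pQuad {A : Type} [CommRing A] (n : ℕ) (z : ℕ → A) : ℕ → A := fun k =>
  if k = 1 then z n
  else if k = 2 then z (n + 1)
  else (∑ m ∈ Finset.range (n - k), (-1 : A) ^ m * z (n + 1 - k - m) * z (n + k + m))
    + (-1 : A) ^ (n - k) * z (2 * n)

/-- In any commutative ring in which the quadric relation
`Σ_{i=1}^{n} (−1)^i z_i z_{2n+1−i} = 0` holds with `z 1 = 1` (equivalently, in the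
quotient ring `ℂ[z₂,…,z_{2n}]/(q(1,z₂,…,z_{2n}))`), the exchange relation
`z_{n−1} z_{n+2} = p₁ p₂ + p₃` holds, where `p₁ = z n`, `p₂ = z (n+1)` and
`p₃ = Σ_{m=0}^{n−4} (−1)^m z_{n−2−m} z_{n+3+m} + (−1)^{n−3} z_{2n}`. -/
theorem stmt_11 {A : Type} [CommRing A] (n : ℕ) (hn : 4 ≤ n) (z : ℕ → A)
    (hz1 : z 1 = 1)
    (hq : ∑ i ∈ Finset.Icc 1 n, (-1 : A) ^ i * z i * z (2 * n + 1 - i) = 0) :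
    z (n - 1) * z (n + 2) = pQuad n z 1 * pQuad n z 2 + pQuad n z 3 := by
  simp only [pQuad]
  norm_num
  set a : A := (-1 : A) ^ (n - 1) with ha
  have haa : a * a = 1 := by
    rw [ha, ← pow_add]
    exact Even.neg_one_pow ⟨n - 1, by ring⟩
  have han : ((-1 : A)) ^ n = -a := by
    have h : ((-1 : A)) ^ (n - 1 + 1) = (-1) ^ (n - 1) * (-1) := pow_succ _ _
    rw [show n - 1 + 1 = n by omega] at h
    rw [h, ha]; ring
  have han3 : ((-1 : A)) ^ (n - 3) = a := by
    rw [ha, show n - 1 = (n - 3) + 2 by omega, pow_add]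
    ring
  -- decompose the index set
  have hset : Finset.Icc 1 n =
      insert n (insert (n - 1) (insert 1 ((Finset.range (n - 3)).image (fun m => n - 2 - m)))) := by
    ext i
    simp only [Finset.mem_Icc, Finset.mem_insert, Finset.mem_image, Finset.mem_range]
    constructor
    · rintro ⟨h1, h2⟩
      by_cases hi : i = n; · left; exact hi
      by_cases hi2 : i = n - 1; · right; left; exact hi2
      by_cases hi3 : i = 1; · right; right; left; exact hi3
      exact Or.inr (Or.inr (Or.inr ⟨n - 2 - i, by omega, by omega⟩))
    · rintro (rfl | rfl | rfl | ⟨m, hm, rfl⟩) <;> omega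
  have hm1 : (1 : ℕ) ∉ (Finset.range (n - 3)).image (fun m => n - 2 - m) := by
    simp only [Finset.mem_image, Finset.mem_range, not_exists]
    intro m
    omega
  have hm2 : n - 1 ∉ insert 1 ((Finset.range (n - 3)).image (fun m => n - 2 - m)) := by
    simp only [Finset.mem_insert, Finset.mem_image, Finset.mem_range, not_or, not_exists]
    constructor
    · omega
    · intro m; omega
  have hm3 : n ∉ insert (n - 1) (insert 1 ((Finset.range (n - 3)).image (fun m => n - 2 - m))) := by
    simp only [Finset.mem_insert, Finset.mem_image, Finset.mem_range, not_or, not_exists]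
    refine ⟨by omega, by omega, ?_⟩
    intro m; omega
  rw [hset, Finset.sum_insert hm3, Finset.sum_insert hm2, Finset.sum_insert hm1,
    Finset.sum_image (fun x hx y hy h => by
      simp only [Finset.mem_coe, Finset.mem_range] at hx hy; omega)] at hq
  rw [show 2 * n + 1 - n = n + 1 by omega, show 2 * n + 1 - (n - 1) = n + 2 by omega,
    show 2 * n + 1 - 1 = 2 * n by omega, hz1, han] at hq
  -- rewrite the inner sum
  have hsum : ∑ m ∈ Finset.range (n - 3), (-1 : A) ^ (n - 2 - m) * z (n - 2 - m)
        * z (2 * n + 1 - (n - 2 - m))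
      = -(a * ∑ m ∈ Finset.range (n - 3), (-1 : A) ^ m * z (n - 2 - m) * z (n + 3 + m)) := by
    rw [Finset.mul_sum, ← Finset.sum_neg_distrib]
    refine Finset.sum_congr rfl fun m hm => ?_
    simp only [Finset.mem_range] at hm
    rw [show 2 * n + 1 - (n - 2 - m) = n + 3 + m by omega]
    have hsgn : a * (-1 : A) ^ m = -((-1 : A) ^ (n - 2 - m)) := by
      rw [ha, ← pow_add, show n - 1 + m = (n - 2 - m) + (2 * m + 1) by omega, pow_add,
        pow_succ, pow_mul]
      norm_num
    linear_combination (z (n - 2 - m) * z (n + 3 + m)) * hsgn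
  rw [hsum] at hq
  -- rewrite the goal's sum to match
  have hgsum : ∑ m ∈ Finset.range (n - 3), (-1 : A) ^ m * z (n + 1 - 3 - m) * z (n + 3 + m)
      = ∑ m ∈ Finset.range (n - 3), (-1 : A) ^ m * z (n - 2 - m) * z (n + 3 + m) := by
    refine Finset.sum_congr rfl fun m hm => ?_
    have h : n + 1 - 3 - m = n - 2 - m := by omega
    rw [h]
  rw [hgsum, han3]
  set S := ∑ m ∈ Finset.range (n - 3), (-1 : A) ^ m * z (n - 2 - m) * z (n + 3 + m) with hS
  linear_combination a * hq - (z (n - 1) * z (n + 2) - z n * z (n + 1) - S) * haa
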